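/- If f : X → Y and g : Y → X are continuous maps that are mutually inverse homotopy equivalences (g∘f is homotopic to the identity of X and f∘g is homotopic to the identity of Y), then f maps w(X) into w(Y), g maps w(Y) into w(X), and the restrictions f|_{w(X)} : w(X) → w(Y) and g|_{w(Y)} : w(Y) → w(X) are mutually inverse homotopy equivalences. -/

import Mathlib

open Set unitInterval Topology

/-- A point `x` of a topological space `X` is a *wild point* of `X` if every neighborhood `U`
of `x` contains a loop that is not null-homotopic in `X`. -/
def IsWildPoint {X : Type*} [TopologicalSpace X] (x : X) : Prop :=
  ∀ U ∈ 𝓝 x, ∃ (y : X) (γ : Path y y), Set.range ⇑γ ⊆ U ∧ ¬ γ.Homotopic (Path.refl y)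

/-- The set of wild points of `X`. -/
def wildSet (X : Type*) [TopologicalSpace X] : Set X := {x | IsWildPoint x}

/-- Iterated wild sets: `iterWild X 0 = X` and `iterWild X (n+1) = w(iterWild X n)`,
where the wild set of the subspace is taken with the subspace topology. -/
def iterWild (X : Type*) [TopologicalSpace X] : ℕ → Set X
  | 0 => Set.univ
  | n + 1 => Subtype.val '' wildSet ↥(iterWild X n)

/-- The wildness rank of `X`: the least `n` with `iterWild X n = ∅`, and `⊤` if none exists. -/
noncomputable def wildRank (X : Type*) [TopologicalSpace X] : ℕ∞ :=
  sInf ((↑) '' {n : ℕ | iterWild X n = ∅})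

/-- `X` is `w`-stable if every iterated wild set is locally path-connected. -/
def WStable (X : Type*) [TopologicalSpace X] : Prop :=
  ∀ n : ℕ, LocPathConnectedSpace ↥(iterWild X n)

/-- `X` has Lebesgue covering dimension at most one: every open cover admits an open
refinement which covers `X` and in which every point lies in at most two members. -/
def DimLEOne (X : Type*) [TopologicalSpace X] : Prop :=
  ∀ 𝒰 : Set (Set X), (∀ U ∈ 𝒰, IsOpen U) → ⋃₀ 𝒰 = Set.univ →
    ∃ 𝒱 : Set (Set X), (∀ V ∈ 𝒱, IsOpen V) ∧ ⋃₀ 𝒱 = Set.univ ∧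
      (∀ V ∈ 𝒱, ∃ U ∈ 𝒰, V ⊆ U) ∧
      ∀ x : X, ∃ V₁ V₂ : Set X, ∀ V ∈ 𝒱, x ∈ V → V = V₁ ∨ V = V₂

/-- A subset `A ⊆ X` is categorical in `X` if the inclusion `A → X` is homotopic to a
constant map. -/
def IsCategorical (X : Type*) [TopologicalSpace X] (A : Set X) : Prop :=
  ∃ y : X, ContinuousMap.Homotopic
    (⟨Subtype.val, continuous_subtype_val⟩ : C(↥A, X)) (ContinuousMap.const ↥A y)

/-- `A ⊆ X × X` admits a motion plan in `X` if the two coordinate projections `A → X`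
are homotopic. -/
def AdmitsMotionPlan (X : Type*) [TopologicalSpace X] (A : Set (X × X)) : Prop :=
  ContinuousMap.Homotopic
    (⟨fun p : A => (p : X × X).1, continuous_fst.comp continuous_subtype_val⟩ : C(↥A, X))
    (⟨fun p : A => (p : X × X).2, continuous_snd.comp continuous_subtype_val⟩ : C(↥A, X))

/-- The normalized Lusternik–Schnirelmann category of `X`, defined via closed filtrations
`∅ = F₋₁ ⊆ F 0 ⊆ ⋯ ⊆ F n = X` with categorical differences. -/
noncomputable def LSCat (X : Type*) [TopologicalSpace X] : ℕ∞ :=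
  sInf ((↑) '' {n : ℕ | ∃ F : ℕ → Set X, Monotone F ∧ (∀ j, IsClosed (F j)) ∧
    F n = Set.univ ∧ IsCategorical X (F 0) ∧ ∀ j < n, IsCategorical X (F (j + 1) \ F j)})

/-- The normalized topological complexity of `X`, defined via closed filtrations of `X × X`
whose differences admit motion plans. -/
noncomputable def TopComplexity (X : Type*) [TopologicalSpace X] : ℕ∞ :=
  sInf ((↑) '' {n : ℕ | ∃ F : ℕ → Set (X × X), Monotone F ∧ (∀ j, IsClosed (F j)) ∧
    F n = Set.univ ∧ AdmitsMotionPlan X (F 0) ∧ ∀ j < n, AdmitsMotionPlan X (F (j + 1) \ F j)})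

/-- The relative LS-category `cat_X(A)` defined via filtrations of `A` by subsets closed in `A`
whose differences are categorical in `X`. -/
noncomputable def relCat (X : Type*) [TopologicalSpace X] (A : Set X) : ℕ∞ :=
  sInf ((↑) '' {n : ℕ | ∃ F : ℕ → Set X, Monotone F ∧ (∀ j, F j ⊆ A) ∧
    (∀ j, IsClosed ((Subtype.val ⁻¹' F j : Set ↥A))) ∧ F n = A ∧
    IsCategorical X (F 0) ∧ ∀ j < n, IsCategorical X (F (j + 1) \ F j)})

/-- A simple closed curve in `X` is a subspace homeomorphic to the circle. -/
def IsSimpleClosedCurve {X : Type*} [TopologicalSpace X] (S : Set X) : Prop :=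
  Nonempty (↥S ≃ₜ Circle)

/-- A continuous map is `π₁`-injective if every based loop whose image is null-homotopic is
itself null-homotopic (equivalently, the induced homomorphism on fundamental groups is
injective at every basepoint). -/
def Pi1Injective {X Y : Type*} [TopologicalSpace X] [TopologicalSpace Y] (f : C(X, Y)) : Prop :=
  ∀ (x : X) (γ : Path x x), (γ.map f.continuous).Homotopic (Path.refl (f x)) →
    γ.Homotopic (Path.refl x)

attribute [local instance] Path.Homotopic.setoid

open CategoryTheory FundamentalGroupoid FundamentalGroupoidFunctor in
lemma loop_null_of_homotopic_id {X : Type u} [TopologicalSpace X] (h : C(X, X))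
    (H : ContinuousMap.Homotopy h (ContinuousMap.id X)) (x : X) (γ : Path x x)
    (hnull : (γ.map h.continuous).Homotopic (Path.refl (h x))) :
    γ.Homotopic (Path.refl x) := by
  let X' : TopCat.{u} := TopCat.of X
  let h' : C(X', X') := h
  let H' : ContinuousMap.Homotopy h' (ContinuousMap.id X') := H
  let N := homotopicMapsNatIso H'
  have nat := N.naturality (X := FundamentalGroupoid.mk x) (Y := FundamentalGroupoid.mk x)
    (⟦γ⟧ : Path.Homotopic.Quotient x x)
  have h1 : (FundamentalGroupoid.map h').map (⟦γ⟧ : Path.Homotopic.Quotient x x) =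
      (⟦Path.refl (h x)⟧ : Path.Homotopic.Quotient (h x) (h x)) := Quotient.sound hnull
  have h2 : (FundamentalGroupoid.map (ContinuousMap.id X')).map (⟦γ⟧ : Path.Homotopic.Quotient x x) =
      (⟦γ⟧ : Path.Homotopic.Quotient x x) := by
    show (⟦γ.map (ContinuousMap.id X').continuous⟧ : Path.Homotopic.Quotient x x) = ⟦γ⟧
    congr 1
  rw [h1, h2] at nat
  rw [← FundamentalGroupoid.id_eq_path_refl] at nat
  erw [Category.id_comp] at nat
  have : (⟦γ⟧ : Path.Homotopic.Quotient x x) = 𝟙 (FundamentalGroupoid.mk x) := by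
    refine (cancel_epi (N.app (FundamentalGroupoid.mk x))).mp ?_
    erw [Category.comp_id]
    exact nat.symm
  exact Quotient.exact this

lemma pi1_injective_aux {X Y : Type*} [TopologicalSpace X] [TopologicalSpace Y]
    (f : C(X, Y)) (g : C(Y, X)) (hgf : (g.comp f).Homotopic (ContinuousMap.id X))
    (x : X) (γ : Path x x) (hnull : (γ.map f.continuous).Homotopic (Path.refl (f x))) :
    γ.Homotopic (Path.refl x) := by
  obtain ⟨H⟩ := hgf
  apply loop_null_of_homotopic_id (g.comp f) H x γ
  have h1 : ((γ.map f.continuous).map g.continuous).Homotopic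
      ((Path.refl (f x)).map g.continuous) := Path.Homotopic.map hnull g
  convert h1 using 1 <;> rfl

lemma aux_mapsTo_wildSet {X Y : Type*} [TopologicalSpace X] [TopologicalSpace Y]
    (f : C(X, Y)) (g : C(Y, X)) (hgf : (g.comp f).Homotopic (ContinuousMap.id X)) :
    Set.MapsTo f (wildSet X) (wildSet Y) := by
  intro x hx U hU
  obtain ⟨y, γ, hr, hn⟩ := hx (f ⁻¹' U) (f.continuous.continuousAt.preimage_mem_nhds hU)
  refine ⟨f y, γ.map f.continuous, ?_, ?_⟩
  · rintro _ ⟨t, rfl⟩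
    exact hr ⟨t, rfl⟩
  · intro hcon
    exact hn (pi1_injective_aux f g hgf y γ hcon)

/-- A map homotopic to the identity, as a homotopy slice. -/
lemma aux_slice_mapsTo {X : Type*} [TopologicalSpace X] (h : C(X, X))
    (H : ContinuousMap.Homotopy h (ContinuousMap.id X)) (t : I) :
    Set.MapsTo (fun x => H (t, x)) (wildSet X) (wildSet X) := by
  let ht : C(X, X) := ⟨fun x => H (t, x),
    H.continuous.comp (continuous_const.prodMk continuous_id)⟩
  have Hht : ContinuousMap.Homotopy ht (ContinuousMap.id X) :=
    { toFun := fun p => H (t ⊔ p.1, p.2)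
      continuous_toFun := H.continuous.comp
        (((continuous_const.max continuous_fst).prodMk continuous_snd))
      map_zero_left := fun x => by
        show H (t ⊔ 0, x) = ht x
        rw [sup_eq_left.mpr (unitInterval.nonneg' : (0:I) ≤ t)]
        rfl
      map_one_left := fun x => by
        show H (t ⊔ 1, x) = (ContinuousMap.id X) x
        rw [sup_eq_right.mpr (unitInterval.le_one' : t ≤ 1)]
        exact H.apply_one x }
  have : ((ContinuousMap.id X).comp ht).Homotopic (ContinuousMap.id X) := by
    rw [ContinuousMap.id_comp]; exact ⟨Hht⟩
  exact aux_mapsTo_wildSet ht (ContinuousMap.id X) this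

lemma aux_restricted_homotopic_id {X Y : Type*} [TopologicalSpace X] [TopologicalSpace Y]
    (f : C(X, Y)) (g : C(Y, X)) (hgf : (g.comp f).Homotopic (ContinuousMap.id X))
    (hf : Set.MapsTo f (wildSet X) (wildSet Y)) (hg : Set.MapsTo g (wildSet Y) (wildSet X)) :
    ((⟨Set.MapsTo.restrict g (wildSet Y) (wildSet X) hg,
          Continuous.restrict hg g.continuous⟩ : C(↥(wildSet Y), ↥(wildSet X))).comp
        ⟨Set.MapsTo.restrict f (wildSet X) (wildSet Y) hf,
          Continuous.restrict hf f.continuous⟩).Homotopic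
      (ContinuousMap.id ↥(wildSet X)) := by
  obtain ⟨H⟩ := hgf
  exact ⟨{ toFun := fun p => ⟨H (p.1, p.2.1), aux_slice_mapsTo (g.comp f) H p.1 p.2.2⟩
           continuous_toFun := (H.continuous.comp
             (continuous_fst.prodMk (continuous_subtype_val.comp continuous_snd))).subtype_mk _
           map_zero_left := fun x => Subtype.ext (H.apply_zero x.1)
           map_one_left := fun x => Subtype.ext (H.apply_one x.1) }⟩

/-- Mutually inverse homotopy equivalences restrict to mutually inverse homotopy equivalences
between the wild sets. -/
theorem wildSet_restrict_homotopyEquiv (X Y : Type*) [TopologicalSpace X] [TopologicalSpace Y]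
    (f : C(X, Y)) (g : C(Y, X))
    (hgf : (g.comp f).Homotopic (ContinuousMap.id X))
    (hfg : (f.comp g).Homotopic (ContinuousMap.id Y)) :
    ∃ (hf : Set.MapsTo f (wildSet X) (wildSet Y))
      (hg : Set.MapsTo g (wildSet Y) (wildSet X)),
      ((⟨Set.MapsTo.restrict g (wildSet Y) (wildSet X) hg,
            Continuous.restrict hg g.continuous⟩ : C(↥(wildSet Y), ↥(wildSet X))).comp
          ⟨Set.MapsTo.restrict f (wildSet X) (wildSet Y) hf,
            Continuous.restrict hf f.continuous⟩).Homotopic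
        (ContinuousMap.id ↥(wildSet X)) ∧
      ((⟨Set.MapsTo.restrict f (wildSet X) (wildSet Y) hf,
            Continuous.restrict hf f.continuous⟩ : C(↥(wildSet X), ↥(wildSet Y))).comp
          ⟨Set.MapsTo.restrict g (wildSet Y) (wildSet X) hg,
            Continuous.restrict hg g.continuous⟩).Homotopic
        (ContinuousMap.id ↥(wildSet Y)) := by
  have hf := aux_mapsTo_wildSet f g hgf
  have hg := aux_mapsTo_wildSet g f hfg
  exact ⟨hf, hg, aux_restricted_homotopic_id f g hgf hf hg,
    aux_restricted_homotopic_id g f hfg hg hf⟩
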